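/- Let A be a commutative ℚ-algebra and let δ, ∂ be commuting derivations on A, extended coefficientwise to A[[t]], and let ev : A[[t]] → A be evaluation at 0. Then T^{ev}_{δ + ∂ + d/dt} = T^{ev}_{δ + d/dt} ∘ T^{ev}_{∂ + d/dt} as maps A[[t]] → A[[t]]. -/

import Mathlib

open Finset PowerSeries Function

/-- The coefficientwise extension of a map `δ : A → A` to `A[[t]]`. -/
noncomputable def coeffwiseDer {A : Type*} [CommRing A] (δ : A → A) :
    PowerSeries A → PowerSeries A :=
  fun f => PowerSeries.mk fun n => δ (PowerSeries.coeff n f)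

/-- The Taylor map `T^{ev}_D(f) = Σ_k ev(D^k f)/k! · t^k` of the evaluation map
`ev : A[[t]] → A` at `0`, for a map `D` on `A[[t]]`. -/
noncomputable def taylorEv {A : Type*} [CommRing A] [Algebra ℚ A]
    (D : PowerSeries A → PowerSeries A) : PowerSeries A → PowerSeries A :=
  fun f => PowerSeries.mk fun k =>
    (k.factorial : ℚ)⁻¹ • PowerSeries.constantCoeff (D^[k] f)


/-- `tEvProd n m = (n+1)(n+2)⋯(n+m)`. -/
def tEvProd (n m : ℕ) : ℕ := ∏ i ∈ range m, (n + 1 + i)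

lemma tEvProd_succ (n m : ℕ) : tEvProd n (m + 1) = (n + 1) * tEvProd (n + 1) m := by
  unfold tEvProd
  rw [prod_range_succ']
  simp only [add_zero]
  rw [mul_comm]
  congr 1
  exact prod_congr rfl fun i _ => by omega

lemma tEvProd_zero_left (m : ℕ) : tEvProd 0 m = m.factorial := by
  induction m with
  | zero => rfl
  | succ m ih =>
    unfold tEvProd at *
    rw [prod_range_succ, ih, Nat.factorial_succ]
    ring

section
variable {A : Type*} [CommRing A]

lemma coeff_coeffwiseDer (φ : A → A) (g : PowerSeries A) (n : ℕ) :
    PowerSeries.coeff n (coeffwiseDer φ g) = φ (PowerSeries.coeff n g) := by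
  simp [coeffwiseDer]

lemma coeff_coeffwiseDer_iterate (φ : A → A) (g : PowerSeries A) (j n : ℕ) :
    PowerSeries.coeff n ((coeffwiseDer φ)^[j] g) = φ^[j] (PowerSeries.coeff n g) := by
  induction j generalizing g with
  | zero => rfl
  | succ j ih =>
    rw [Function.iterate_succ_apply', Function.iterate_succ_apply', coeff_coeffwiseDer, ih]

lemma coeff_derivativeFun' (f : PowerSeries A) (n : ℕ) :
    PowerSeries.coeff n f.derivativeFun = PowerSeries.coeff (n + 1) f * (n + 1) :=
  PowerSeries.coeff_derivative f n

lemma coeff_derivativeFun_iterate (f : PowerSeries A) (m n : ℕ) :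
    PowerSeries.coeff n (PowerSeries.derivativeFun^[m] f)
      = tEvProd n m • PowerSeries.coeff (n + m) f := by
  induction m generalizing n with
  | zero => simp [tEvProd]
  | succ m ih =>
    rw [Function.iterate_succ_apply', coeff_derivativeFun', ih, tEvProd_succ,
      mul_smul, smul_mul_assoc]
    rw [show n + 1 + m = n + (m + 1) by omega]
    rw [smul_comm, nsmul_eq_mul]
    ring

/-- Iterates of an additive map commute with `ℕ`-scalars. -/
lemma iterate_map_nsmul' (φ : A →+ A) (m c : ℕ) (x : A) :
    φ^[m] (c • x) = c • φ^[m] x := by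
  induction m generalizing x with
  | zero => rfl
  | succ m ih =>
    rw [Function.iterate_succ_apply, Function.iterate_succ_apply, map_nsmul, ih]

/-- The coefficientwise extension as a `ℤ`-linear endomorphism. -/
noncomputable def cwEnd (φ : A →+ A) : Module.End ℤ (PowerSeries A) :=
  AddMonoidHom.toIntLinearMap
    (AddMonoidHom.mk' (coeffwiseDer ⇑φ) (by
      intro a b
      ext n
      simp [coeff_coeffwiseDer, map_add]))

lemma cwEnd_coe (φ : A →+ A) : ⇑(cwEnd φ) = coeffwiseDer ⇑φ := rfl

/-- The formal derivative as a `ℤ`-linear endomorphism. -/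
noncomputable def derivEnd (A : Type*) [CommRing A] : Module.End ℤ (PowerSeries A) :=
  AddMonoidHom.toIntLinearMap
    (AddMonoidHom.mk' PowerSeries.derivativeFun PowerSeries.derivativeFun_add)

lemma derivEnd_coe : ⇑(derivEnd A) = PowerSeries.derivativeFun := rfl

lemma cwEnd_comm_derivEnd (φ : A →+ A) : Commute (cwEnd φ) (derivEnd A) := by
  apply LinearMap.ext
  intro f
  ext n
  show PowerSeries.coeff n (cwEnd φ (derivEnd A f))
      = PowerSeries.coeff n (derivEnd A (cwEnd φ f))
  rw [cwEnd_coe, derivEnd_coe, coeff_coeffwiseDer, coeff_derivativeFun',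
    coeff_derivativeFun', coeff_coeffwiseDer]
  rw [show (PowerSeries.coeff (n + 1) f) * ((n : A) + 1)
      = (n + 1) • (PowerSeries.coeff (n + 1) f) from by rw [nsmul_eq_mul]; push_cast; ring,
    map_nsmul, nsmul_eq_mul]
  push_cast
  ring

lemma constantCoeff_iterate (φ : A →+ A) (f : PowerSeries A) (k : ℕ) :
    PowerSeries.constantCoeff
        ((fun g => coeffwiseDer ⇑φ g + PowerSeries.derivativeFun g)^[k] f)
      = ∑ j ∈ range (k + 1),
          (k.choose j * (k - j).factorial) • φ^[j] (PowerSeries.coeff (k - j) f) := by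
  have hfun : (fun g => coeffwiseDer ⇑φ g + PowerSeries.derivativeFun g)
      = ⇑(cwEnd φ + derivEnd A) := by
    funext g; simp [cwEnd_coe, derivEnd_coe]
  rw [hfun, ← Module.End.pow_apply, (cwEnd_comm_derivEnd φ).add_pow]
  rw [LinearMap.coe_sum, Finset.sum_apply, map_sum]
  apply Finset.sum_congr rfl
  intro j hj
  rw [Module.End.mul_apply, Module.End.mul_apply, Module.End.natCast_apply,
    map_nsmul, map_nsmul, map_nsmul]
  rw [← PowerSeries.coeff_zero_eq_constantCoeff_apply, Module.End.pow_apply, Module.End.pow_apply,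
    cwEnd_coe, derivEnd_coe, coeff_coeffwiseDer_iterate, coeff_derivativeFun_iterate,
    iterate_map_nsmul', tEvProd_zero_left, zero_add, mul_smul]

end

section
variable {M : Type*} [AddCommMonoid M]

lemma tEv_triangle (g : ℕ → ℕ → M) (n : ℕ) :
    ∑ k ∈ range (n + 1), ∑ i ∈ range (k + 1), g i (k - i)
      = ∑ j ∈ range (n + 1), ∑ i ∈ range (n + 1 - j), g j i := by
  induction n with
  | zero => simp
  | succ n ih =>
    rw [sum_range_succ, ih, sum_range_succ (fun j => ∑ i ∈ range (n + 1 + 1 - j), g j i)]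
    have h1 : ∀ j ∈ range (n + 1), ∑ i ∈ range (n + 1 + 1 - j), g j i
        = (∑ i ∈ range (n + 1 - j), g j i) + g j (n + 1 - j) := by
      intro j hj
      have hj' : j ≤ n := Nat.lt_succ_iff.mp (mem_range.mp hj)
      rw [show n + 1 + 1 - j = (n + 1 - j) + 1 by omega, sum_range_succ]
    rw [sum_congr rfl h1, sum_add_distrib, sum_range_succ (fun i => g i (n + 1 - i))]
    simp only [Nat.sub_self, Nat.add_sub_cancel_left]
    rw [sum_range_one, add_assoc]
end

lemma taylorEv_eq {A : Type*} [CommRing A] [Algebra ℚ A] (φ : A →+ A) (f : PowerSeries A) :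
    taylorEv (fun g => coeffwiseDer ⇑φ g + PowerSeries.derivativeFun g) f
      = PowerSeries.mk fun n => ∑ j ∈ range (n + 1),
          (j.factorial : ℚ)⁻¹ • φ^[j] (PowerSeries.coeff (n - j) f) := by
  unfold taylorEv
  refine congrArg PowerSeries.mk (funext fun k => ?_)
  rw [constantCoeff_iterate, smul_sum]
  apply sum_congr rfl
  intro j hj
  have hjk : j ≤ k := Nat.lt_succ_iff.mp (mem_range.mp hj)
  rw [← Nat.cast_smul_eq_nsmul ℚ, smul_smul]
  congr 1
  have h := Nat.choose_mul_factorial_mul_factorial hjk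
  have hc : ((k.choose j * j.factorial * (k - j).factorial : ℕ) : ℚ) = (k.factorial : ℚ) := by
    exact_mod_cast congrArg (Nat.cast : ℕ → ℚ) h
  have h0 : (k.factorial : ℚ) ≠ 0 := by exact_mod_cast k.factorial_ne_zero
  have h1 : (j.factorial : ℚ) ≠ 0 := by exact_mod_cast j.factorial_ne_zero
  push_cast at hc ⊢
  field_simp
  linear_combination hc

/-- For commuting derivations `δ, ∂` on a ℚ-algebra `A`,
`T^{ev}_{δ + ∂ + d/dt} = T^{ev}_{δ + d/dt} ∘ T^{ev}_{∂ + d/dt}`. -/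
theorem taylorEv_comp {A : Type*} [CommRing A] [Algebra ℚ A]
    (δ d : Derivation ℤ A A) (hcomm : ∀ a : A, δ (d a) = d (δ a)) :
    ∀ f : PowerSeries A,
      taylorEv (fun g => coeffwiseDer (fun a => δ a + d a) g
          + PowerSeries.derivativeFun g) f =
        taylorEv (fun g => coeffwiseDer (⇑δ) g + PowerSeries.derivativeFun g)
          (taylorEv (fun g => coeffwiseDer (⇑d) g + PowerSeries.derivativeFun g) f) := by
  intro f
  set φδ : A →+ A := δ.toLinearMap.toAddMonoidHom with hφδ
  set φd : A →+ A := d.toLinearMap.toAddMonoidHom with hφd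
  have hδc : ⇑δ = ⇑φδ := rfl
  have hdc : ⇑d = ⇑φd := rfl
  have hsum : (fun a : A => δ a + d a) = ⇑(φδ + φd) := rfl
  rw [hsum, hδc, hdc, taylorEv_eq, taylorEv_eq, taylorEv_eq]
  refine congrArg PowerSeries.mk (funext fun n => ?_)
  -- ℚ-linear endomorphisms
  set X : Module.End ℚ A := AddMonoidHom.toRatLinearMap φδ with hX
  set Y : Module.End ℚ A := AddMonoidHom.toRatLinearMap φd with hY
  have hXc : ⇑X = ⇑φδ := AddMonoidHom.coe_toRatLinearMap φδ
  have hYc : ⇑Y = ⇑φd := AddMonoidHom.coe_toRatLinearMap φd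
  have hXY : Commute X Y := by
    apply LinearMap.ext
    intro a
    show X (Y a) = Y (X a)
    simp only [hXc, hYc]
    exact hcomm a
  have hXit : ∀ (j : ℕ) (a : A), (⇑φδ)^[j] a = (X ^ j) a := by
    intro j a; rw [Module.End.pow_apply, hXc]
  have hYit : ∀ (j : ℕ) (a : A), (⇑φd)^[j] a = (Y ^ j) a := by
    intro j a; rw [Module.End.pow_apply, hYc]
  -- the common pairwise term
  set G : ℕ → ℕ → A := fun j i =>
    ((j.factorial : ℚ)⁻¹ * (i.factorial : ℚ)⁻¹) •
      (⇑φδ)^[j] ((⇑φd)^[i] (PowerSeries.coeff (n - j - i) f)) with hG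
  have LHS : ∑ k ∈ range (n + 1),
      (k.factorial : ℚ)⁻¹ • (⇑(φδ + φd))^[k] (PowerSeries.coeff (n - k) f)
      = ∑ k ∈ range (n + 1), ∑ i ∈ range (k + 1), G i (k - i) := by
    apply sum_congr rfl
    intro k hk
    have hkn : k ≤ n := Nat.lt_succ_iff.mp (mem_range.mp hk)
    have hadd : (⇑(φδ + φd)) = ⇑(X + Y) := by
      funext a; simp [hXc, hYc]
    rw [hadd]
    rw [show (⇑(X + Y))^[k] (PowerSeries.coeff (n - k) f)
        = ((X + Y) ^ k) (PowerSeries.coeff (n - k) f) from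
      (Module.End.pow_apply _ _ _).symm]
    rw [hXY.add_pow, LinearMap.coe_sum, Finset.sum_apply, smul_sum]
    apply sum_congr rfl
    intro i hi
    have hik : i ≤ k := Nat.lt_succ_iff.mp (mem_range.mp hi)
    rw [Module.End.mul_apply, Module.End.mul_apply, Module.End.natCast_apply,
      map_nsmul, map_nsmul]
    rw [hG]
    simp only
    rw [hXit, hYit, ← Nat.cast_smul_eq_nsmul ℚ, smul_smul,
      show n - i - (k - i) = n - k by omega]
    congr 1
    have h := Nat.choose_mul_factorial_mul_factorial hik
    have hc : ((k.choose i * i.factorial * (k - i).factorial : ℕ) : ℚ)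
        = (k.factorial : ℚ) := by exact_mod_cast congrArg (Nat.cast : ℕ → ℚ) h
    have h0 : (k.factorial : ℚ) ≠ 0 := by exact_mod_cast k.factorial_ne_zero
    have h1 : (i.factorial : ℚ) ≠ 0 := by exact_mod_cast i.factorial_ne_zero
    have h2 : ((k - i).factorial : ℚ) ≠ 0 := by exact_mod_cast (k - i).factorial_ne_zero
    push_cast at hc ⊢
    field_simp
    linear_combination hc
  have RHS : ∑ j ∈ range (n + 1), (j.factorial : ℚ)⁻¹ •
        (⇑φδ)^[j] (PowerSeries.coeff (n - j)
          (PowerSeries.mk fun m => ∑ i ∈ range (m + 1),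
            (i.factorial : ℚ)⁻¹ • (⇑φd)^[i] (PowerSeries.coeff (m - i) f)))
      = ∑ j ∈ range (n + 1), ∑ i ∈ range (n + 1 - j), G j i := by
    apply sum_congr rfl
    intro j hj
    have hjn : j ≤ n := Nat.lt_succ_iff.mp (mem_range.mp hj)
    rw [PowerSeries.coeff_mk, hXit, map_sum, smul_sum,
      show n - j + 1 = n + 1 - j by omega]
    apply sum_congr rfl
    intro i hi
    rw [map_smul, ← hXit, smul_smul]
  rw [LHS, RHS]
  exact tEv_triangle G n
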